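/- Let 0 < α < β < γ < L, a > 0, c₀ > 0, κ₁ > 0, κ₂ ∈ ℝ \ {0}, λ ∈ ℝ, and let h : [0,L] → ℝ be continuously differentiable. Let u : [0,L] → ℂ be differentiable, let v, z, f¹, f³ : [0,L] → ℂ be continuously differentiable with v(0) = v(L) = z(0) = z(L) = 0, let y : [0,L] → ℂ be twice continuously differentiable, let f², f⁴ : [0,L] → ℂ be continuous, let w : [0,β] → ℂ be continuous, and let S : [0,L] → ℂ be continuously differentiable with S(x) = a u′(x) + κ₁ v′(x) + κ₂ w(x) for x ∈ (0,β) and S(x) = a u′(x) for x ∈ (β,L). Assume that on (0,L): i λ u − v = f¹, i λ v − S′ + c(·) z = f², i λ y − z = f³, and i λ z − y″ − c(·) v = f⁴. Then ∫₀^L h′ ( a⁻¹|S|² + |v|² + |z|² + |y′|² ) dx − [ h ( a⁻¹|S|² + |y′|² ) ]₀^L − Re( 2 ∫₀^L c(·) h v ȳ′ dx ) + Re( (2/a) ∫₀^L c(·) h z S̄ dx ) + Re( (2 i λ / a) ∫₀^β h v ( κ₁ v̄′ + κ₂ w̄ ) dx ) = Re( 2 ∫₀^L h f̄¹′ v dx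 ) + Re( (2/a) ∫₀^L h f² S̄ dx ) + Re( 2 ∫₀^L h f̄³′ z dx ) + Re( 2 ∫₀^L h f⁴ ȳ′ dx ), where [F]₀^L = F(L) − F(0). -/

import Mathlib

open MeasureTheory Complex

lemma core_id (a lam κ₁ κ₂ cc H : ℝ) (ha : a ≠ 0)
    (up v vp z zp yp ypp w f1p f2 f3p f4 s sp : ℂ)
    (e1 : Complex.I * (lam:ℂ) * up - vp = f1p)
    (e2 : Complex.I * (lam:ℂ) * v - sp + (cc:ℂ) * z = f2)
    (e3 : Complex.I * (lam:ℂ) * yp - zp = f3p)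
    (e4 : Complex.I * (lam:ℂ) * z - ypp - (cc:ℂ) * v = f4)
    (es : s = (a:ℂ) * up + (κ₁:ℂ) * vp + (κ₂:ℂ) * w) :
    (((2/a:ℝ):ℂ) * ((cc:ℂ) * (H:ℂ) * z * (starRingEnd ℂ) s)).re
      + ((2:ℂ) * Complex.I * (lam:ℂ) / (a:ℂ)
          * ((H:ℂ) * v * ((κ₁:ℂ) * (starRingEnd ℂ) vp + (κ₂:ℂ) * (starRingEnd ℂ) w))).re
    = H * (a⁻¹ * (2 * (sp * (starRingEnd ℂ) s).re) + 2 * (vp * (starRingEnd ℂ) v).re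
        + 2 * (zp * (starRingEnd ℂ) z).re + 2 * (ypp * (starRingEnd ℂ) yp).re)
      + ((2:ℂ) * ((cc:ℂ) * (H:ℂ) * v * (starRingEnd ℂ) yp)).re
      + ((2:ℂ) * ((H:ℂ) * (starRingEnd ℂ) f1p * v)).re
      + (((2/a:ℝ):ℂ) * ((H:ℂ) * f2 * (starRingEnd ℂ) s)).re
      + ((2:ℂ) * ((H:ℂ) * (starRingEnd ℂ) f3p * z)).re
      + ((2:ℂ) * ((H:ℂ) * f4 * (starRingEnd ℂ) yp)).re := by
  subst es
  have hf1 : f1p = Complex.I * (lam:ℂ) * up - vp := e1.symm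
  have hf2 : f2 = Complex.I * (lam:ℂ) * v - sp + (cc:ℂ) * z := e2.symm
  have hf3 : f3p = Complex.I * (lam:ℂ) * yp - zp := e3.symm
  have hf4 : f4 = Complex.I * (lam:ℂ) * z - ypp - (cc:ℂ) * v := e4.symm
  subst hf1 hf2 hf3 hf4
  have hd : (2:ℂ) * Complex.I * (lam:ℂ) / (a:ℂ) = ((2/a:ℝ):ℂ) * (Complex.I * (lam:ℂ)) := by
    push_cast; field_simp
  rw [hd]
  simp only [map_add, map_mul, map_sub, Complex.conj_I, Complex.conj_ofReal,
    Complex.add_re, Complex.sub_re, Complex.mul_re, Complex.mul_im, Complex.add_im,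
    Complex.sub_im, Complex.I_re, Complex.I_im, Complex.ofReal_re, Complex.ofReal_im,
    Complex.conj_re, Complex.conj_im, Complex.re_ofNat, Complex.im_ofNat, Complex.neg_re, Complex.neg_im]
  field_simp
  ring

lemma hasDerivAt_normSq' {f : ℝ → ℂ} {f' : ℂ} {x : ℝ} (hf : HasDerivAt f f' x) :
    HasDerivAt (fun t => ‖f t‖ ^ 2) (2 * (f' * (starRingEnd ℂ) (f x)).re) x := by
  have hre : HasDerivAt (fun t => (f t).re) f'.re x :=
    Complex.reCLM.hasFDerivAt.comp_hasDerivAt x hf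
  have him : HasDerivAt (fun t => (f t).im) f'.im x :=
    Complex.imCLM.hasFDerivAt.comp_hasDerivAt x hf
  have h1 : HasDerivAt (fun t => (f t).re * (f t).re + (f t).im * (f t).im)
      (f'.re * (f x).re + (f x).re * f'.re + (f'.im * (f x).im + (f x).im * f'.im)) x :=
    (hre.mul hre).add (him.mul him)
  have h2 : (fun t => ‖f t‖ ^ 2) = fun t => (f t).re * (f t).re + (f t).im * (f t).im := by
    funext t
    rw [Complex.sq_norm, Complex.normSq_apply]
  rw [h2]
  convert h1 using 1
  simp [Complex.mul_re, Complex.conj_re, Complex.conj_im]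
  ring

lemma re_intervalIntegral {f : ℝ → ℂ} {a b : ℝ} (hf : IntervalIntegrable f volume a b) :
    (∫ x in a..b, f x).re = ∫ x in a..b, (f x).re := by
  rw [intervalIntegral, intervalIntegral, Complex.sub_re]
  congr 1
  · exact (RCLike.re_eq_complex_re ▸ integral_re hf.1 : _).symm
  · exact (RCLike.re_eq_complex_re ▸ integral_re hf.2 : _).symm

lemma II_re {f : ℝ → ℂ} {a b : ℝ} (hf : IntervalIntegrable f volume a b) :
    IntervalIntegrable (fun x => (f x).re) volume a b :=
  ⟨hf.1.re, hf.2.re⟩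

theorem stmt_9 (L α β γ a c₀ κ₁ κ₂ lam : ℝ)
    (hα : 0 < α) (hαβ : α < β) (hβγ : β < γ) (hγL : γ < L)
    (ha : 0 < a) (hc₀ : 0 < c₀) (hκ₁ : 0 < κ₁) (hκ₂ : κ₂ ≠ 0)
    (c : ℝ → ℝ) (hc : ∀ x, c x = if α < x ∧ x < γ then c₀ else 0)
    (h h' : ℝ → ℝ)
    (hh : ∀ x ∈ Set.Icc (0:ℝ) L, HasDerivAt h (h' x) x)
    (hh'c : ContinuousOn h' (Set.Icc 0 L))
    (u u' : ℝ → ℂ)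
    (hu : ∀ x ∈ Set.Icc (0:ℝ) L, HasDerivAt u (u' x) x)
    (v v' z z' f₁ f₁' f₃ f₃' : ℝ → ℂ)
    (hv : ∀ x ∈ Set.Icc (0:ℝ) L, HasDerivAt v (v' x) x)
    (hv'c : ContinuousOn v' (Set.Icc 0 L))
    (hz : ∀ x ∈ Set.Icc (0:ℝ) L, HasDerivAt z (z' x) x)
    (hz'c : ContinuousOn z' (Set.Icc 0 L))
    (hf₁ : ∀ x ∈ Set.Icc (0:ℝ) L, HasDerivAt f₁ (f₁' x) x)
    (hf₁'c : ContinuousOn f₁' (Set.Icc 0 L))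
    (hf₃ : ∀ x ∈ Set.Icc (0:ℝ) L, HasDerivAt f₃ (f₃' x) x)
    (hf₃'c : ContinuousOn f₃' (Set.Icc 0 L))
    (hv0 : v 0 = 0) (hvL : v L = 0) (hz0 : z 0 = 0) (hzL : z L = 0)
    (y y' y'' : ℝ → ℂ)
    (hy : ∀ x ∈ Set.Icc (0:ℝ) L, HasDerivAt y (y' x) x)
    (hy' : ∀ x ∈ Set.Icc (0:ℝ) L, HasDerivAt y' (y'' x) x)
    (hy''c : ContinuousOn y'' (Set.Icc 0 L))
    (f₂ f₄ : ℝ → ℂ)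
    (hf₂c : ContinuousOn f₂ (Set.Icc 0 L)) (hf₄c : ContinuousOn f₄ (Set.Icc 0 L))
    (w : ℝ → ℂ) (hwc : ContinuousOn w (Set.Icc 0 β))
    (S S' : ℝ → ℂ)
    (hS : ∀ x ∈ Set.Icc (0:ℝ) L, HasDerivAt S (S' x) x)
    (hS'c : ContinuousOn S' (Set.Icc 0 L))
    (hS1 : ∀ x ∈ Set.Ioo (0:ℝ) β,
      S x = (a : ℂ) * u' x + (κ₁ : ℂ) * v' x + (κ₂ : ℂ) * w x)
    (hS2 : ∀ x ∈ Set.Ioo β L, S x = (a : ℂ) * u' x)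
    (heq1 : ∀ x ∈ Set.Ioo (0:ℝ) L, Complex.I * (lam : ℂ) * u x - v x = f₁ x)
    (heq2 : ∀ x ∈ Set.Ioo (0:ℝ) L,
      Complex.I * (lam : ℂ) * v x - S' x + (c x : ℂ) * z x = f₂ x)
    (heq3 : ∀ x ∈ Set.Ioo (0:ℝ) L, Complex.I * (lam : ℂ) * y x - z x = f₃ x)
    (heq4 : ∀ x ∈ Set.Ioo (0:ℝ) L,
      Complex.I * (lam : ℂ) * z x - y'' x - (c x : ℂ) * v x = f₄ x) :
    (∫ x in (0:ℝ)..L,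
        h' x * (a⁻¹ * ‖S x‖ ^ 2 + ‖v x‖ ^ 2 + ‖z x‖ ^ 2 + ‖y' x‖ ^ 2))
      - (h L * (a⁻¹ * ‖S L‖ ^ 2 + ‖y' L‖ ^ 2)
          - h 0 * (a⁻¹ * ‖S 0‖ ^ 2 + ‖y' 0‖ ^ 2))
      - ((2 : ℂ) * ∫ x in (0:ℝ)..L,
          (c x : ℂ) * (h x : ℂ) * v x * (starRingEnd ℂ) (y' x)).re
      + (((2 / a : ℝ) : ℂ) * ∫ x in (0:ℝ)..L,
          (c x : ℂ) * (h x : ℂ) * z x * (starRingEnd ℂ) (S x)).re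
      + ((2 : ℂ) * Complex.I * (lam : ℂ) / (a : ℂ) * ∫ x in (0:ℝ)..β,
          (h x : ℂ) * v x
            * ((κ₁ : ℂ) * (starRingEnd ℂ) (v' x) + (κ₂ : ℂ) * (starRingEnd ℂ) (w x))).re
    = ((2 : ℂ) * ∫ x in (0:ℝ)..L, (h x : ℂ) * (starRingEnd ℂ) (f₁' x) * v x).re
      + (((2 / a : ℝ) : ℂ) * ∫ x in (0:ℝ)..L,
          (h x : ℂ) * f₂ x * (starRingEnd ℂ) (S x)).re
      + ((2 : ℂ) * ∫ x in (0:ℝ)..L, (h x : ℂ) * (starRingEnd ℂ) (f₃' x) * z x).re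
      + ((2 : ℂ) * ∫ x in (0:ℝ)..L, (h x : ℂ) * f₄ x * (starRingEnd ℂ) (y' x)).re := by
  have h0β : (0:ℝ) ≤ β := by linarith
  have hβL : β ≤ L := by linarith
  have h0L : (0:ℝ) ≤ L := by linarith
  have h0βlt : (0:ℝ) < β := by linarith
  have hβLlt : β < L := by linarith
  have huIL : Set.uIcc (0:ℝ) L = Set.Icc 0 L := Set.uIcc_of_le h0L
  have huIβ : Set.uIcc (0:ℝ) β = Set.Icc 0 β := Set.uIcc_of_le h0β
  have huIβL : Set.uIcc β L = Set.Icc β L := Set.uIcc_of_le hβL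
  have hsubβ : Set.Icc (0:ℝ) β ⊆ Set.Icc 0 L := Set.Icc_subset_Icc le_rfl hβL
  have hsubL : Set.uIcc (0:ℝ) β ⊆ Set.uIcc (0:ℝ) L := by
    rw [huIβ, huIL]; exact hsubβ
  have hsubR : Set.uIcc β L ⊆ Set.uIcc (0:ℝ) L := by
    rw [huIβL, huIL]; exact Set.Icc_subset_Icc h0β le_rfl
  -- continuity facts
  have cSc : ContinuousOn S (Set.Icc 0 L) := fun x hx => ((hS x hx).continuousAt).continuousWithinAt
  have cvc : ContinuousOn v (Set.Icc 0 L) := fun x hx => ((hv x hx).continuousAt).continuousWithinAt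
  have czc : ContinuousOn z (Set.Icc 0 L) := fun x hx => ((hz x hx).continuousAt).continuousWithinAt
  have cypc : ContinuousOn y' (Set.Icc 0 L) := fun x hx => ((hy' x hx).continuousAt).continuousWithinAt
  have chc : ContinuousOn h (Set.Icc 0 L) := fun x hx => ((hh x hx).continuousAt).continuousWithinAt
  have chC : ContinuousOn (fun x => (h x : ℂ)) (Set.Icc 0 L) :=
    Complex.continuous_ofReal.comp_continuousOn chc
  -- measurability and boundedness of c
  have hcm : Measurable c := by
    have : c = fun x => if x ∈ Set.Ioo α γ then c₀ else 0 := funext fun x => by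
      rw [hc x]; rfl
    rw [this]
    exact Measurable.ite measurableSet_Ioo measurable_const measurable_const
  have hmeasC : AEStronglyMeasurable (fun x => (c x : ℂ)) (volume : Measure ℝ) :=
    (Complex.measurable_ofReal.comp hcm).aestronglyMeasurable
  have hbd : ∀ x, ‖(c x : ℂ)‖ ≤ c₀ := by
    intro x
    rw [Complex.norm_real, hc x]
    split <;> simp [_root_.abs_of_nonneg hc₀.le, hc₀.le]
  have hmulc : ∀ {g : ℝ → ℂ}, IntervalIntegrable g volume 0 L →
      IntervalIntegrable (fun x => (c x : ℂ) * g x) volume 0 L := fun {g} hg =>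
    ⟨hg.1.bdd_mul hmeasC.restrict (ae_of_all _ hbd), hg.2.bdd_mul hmeasC.restrict (ae_of_all _ hbd)⟩
  -- complex integrand integrability on [0, L]
  have gA1 : IntervalIntegrable
      (fun x => (c x : ℂ) * (h x : ℂ) * v x * (starRingEnd ℂ) (y' x)) volume 0 L := by
    have e : (fun x => (c x : ℂ) * (h x : ℂ) * v x * (starRingEnd ℂ) (y' x))
        = fun x => (c x : ℂ) * ((h x : ℂ) * v x * (starRingEnd ℂ) (y' x)) :=
      funext fun x => by ring
    rw [e]
    exact hmulc ((show ContinuousOn _ (Set.uIcc (0:ℝ) L) by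
      rw [huIL]; exact (chC.mul cvc).mul cypc.star).intervalIntegrable)
  have gA2 : IntervalIntegrable
      (fun x => (c x : ℂ) * (h x : ℂ) * z x * (starRingEnd ℂ) (S x)) volume 0 L := by
    have e : (fun x => (c x : ℂ) * (h x : ℂ) * z x * (starRingEnd ℂ) (S x))
        = fun x => (c x : ℂ) * ((h x : ℂ) * z x * (starRingEnd ℂ) (S x)) :=
      funext fun x => by ring
    rw [e]
    exact hmulc ((show ContinuousOn _ (Set.uIcc (0:ℝ) L) by
      rw [huIL]; exact (chC.mul czc).mul cSc.star).intervalIntegrable)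
  have gA3 : IntervalIntegrable
      (fun x => (h x : ℂ) * v x
        * ((κ₁ : ℂ) * (starRingEnd ℂ) (v' x) + (κ₂ : ℂ) * (starRingEnd ℂ) (w x))) volume 0 β := by
    apply ContinuousOn.intervalIntegrable
    rw [huIβ]
    exact ((chC.mono hsubβ).mul (cvc.mono hsubβ)).mul
      ((continuousOn_const.mul (hv'c.mono hsubβ).star).add (continuousOn_const.mul hwc.star))
  have gA4 : IntervalIntegrable
      (fun x => (h x : ℂ) * (starRingEnd ℂ) (f₁' x) * v x) volume 0 L :=
    (show ContinuousOn _ (Set.uIcc (0:ℝ) L) by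
      rw [huIL]; exact (chC.mul hf₁'c.star).mul cvc).intervalIntegrable
  have gA5 : IntervalIntegrable
      (fun x => (h x : ℂ) * f₂ x * (starRingEnd ℂ) (S x)) volume 0 L :=
    (show ContinuousOn _ (Set.uIcc (0:ℝ) L) by
      rw [huIL]; exact (chC.mul hf₂c).mul cSc.star).intervalIntegrable
  have gA6 : IntervalIntegrable
      (fun x => (h x : ℂ) * (starRingEnd ℂ) (f₃' x) * z x) volume 0 L :=
    (show ContinuousOn _ (Set.uIcc (0:ℝ) L) by
      rw [huIL]; exact (chC.mul hf₃'c.star).mul czc).intervalIntegrable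
  have gA7 : IntervalIntegrable
      (fun x => (h x : ℂ) * f₄ x * (starRingEnd ℂ) (y' x)) volume 0 L :=
    (show ContinuousOn _ (Set.uIcc (0:ℝ) L) by
      rw [huIL]; exact (chC.mul hf₄c).mul cypc.star).intervalIntegrable
  -- rewrite re-of-integral terms
  have E1 : ((2 : ℂ) * ∫ x in (0:ℝ)..L,
        (c x : ℂ) * (h x : ℂ) * v x * (starRingEnd ℂ) (y' x)).re
      = ∫ x in (0:ℝ)..L,
        ((2 : ℂ) * ((c x : ℂ) * (h x : ℂ) * v x * (starRingEnd ℂ) (y' x))).re := by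
    rw [← intervalIntegral.integral_const_mul]
    exact re_intervalIntegral (gA1.const_mul 2)
  have E2 : (((2 / a : ℝ) : ℂ) * ∫ x in (0:ℝ)..L,
        (c x : ℂ) * (h x : ℂ) * z x * (starRingEnd ℂ) (S x)).re
      = ∫ x in (0:ℝ)..L,
        (((2 / a : ℝ) : ℂ) * ((c x : ℂ) * (h x : ℂ) * z x * (starRingEnd ℂ) (S x))).re := by
    rw [← intervalIntegral.integral_const_mul]
    exact re_intervalIntegral (gA2.const_mul _)
  have E3 : ((2 : ℂ) * Complex.I * (lam : ℂ) / (a : ℂ) * ∫ x in (0:ℝ)..β,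
        (h x : ℂ) * v x
          * ((κ₁ : ℂ) * (starRingEnd ℂ) (v' x) + (κ₂ : ℂ) * (starRingEnd ℂ) (w x))).re
      = ∫ x in (0:ℝ)..β,
        ((2 : ℂ) * Complex.I * (lam : ℂ) / (a : ℂ) * ((h x : ℂ) * v x
          * ((κ₁ : ℂ) * (starRingEnd ℂ) (v' x) + (κ₂ : ℂ) * (starRingEnd ℂ) (w x)))).re := by
    rw [← intervalIntegral.integral_const_mul]
    exact re_intervalIntegral (gA3.const_mul _)
  have E4 : ((2 : ℂ) * ∫ x in (0:ℝ)..L, (h x : ℂ) * (starRingEnd ℂ) (f₁' x) * v x).re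
      = ∫ x in (0:ℝ)..L, ((2 : ℂ) * ((h x : ℂ) * (starRingEnd ℂ) (f₁' x) * v x)).re := by
    rw [← intervalIntegral.integral_const_mul]
    exact re_intervalIntegral (gA4.const_mul 2)
  have E5 : (((2 / a : ℝ) : ℂ) * ∫ x in (0:ℝ)..L,
        (h x : ℂ) * f₂ x * (starRingEnd ℂ) (S x)).re
      = ∫ x in (0:ℝ)..L,
        (((2 / a : ℝ) : ℂ) * ((h x : ℂ) * f₂ x * (starRingEnd ℂ) (S x))).re := by
    rw [← intervalIntegral.integral_const_mul]
    exact re_intervalIntegral (gA5.const_mul _)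
  have E6 : ((2 : ℂ) * ∫ x in (0:ℝ)..L, (h x : ℂ) * (starRingEnd ℂ) (f₃' x) * z x).re
      = ∫ x in (0:ℝ)..L, ((2 : ℂ) * ((h x : ℂ) * (starRingEnd ℂ) (f₃' x) * z x)).re := by
    rw [← intervalIntegral.integral_const_mul]
    exact re_intervalIntegral (gA6.const_mul 2)
  have E7 : ((2 : ℂ) * ∫ x in (0:ℝ)..L, (h x : ℂ) * f₄ x * (starRingEnd ℂ) (y' x)).re
      = ∫ x in (0:ℝ)..L, ((2 : ℂ) * ((h x : ℂ) * f₄ x * (starRingEnd ℂ) (y' x))).re := by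
    rw [← intervalIntegral.integral_const_mul]
    exact re_intervalIntegral (gA7.const_mul 2)
  -- FTC for the boundary term
  have cQ : ContinuousOn (fun x => a⁻¹ * ‖S x‖ ^ 2 + ‖v x‖ ^ 2 + ‖z x‖ ^ 2 + ‖y' x‖ ^ 2)
      (Set.Icc 0 L) :=
    (((continuousOn_const.mul (cSc.norm.pow 2)).add (cvc.norm.pow 2)).add
      ((czc.norm.pow 2))).add (cypc.norm.pow 2)
  have cD : ContinuousOn (fun x => a⁻¹ * (2 * (S' x * (starRingEnd ℂ) (S x)).re)
          + 2 * (v' x * (starRingEnd ℂ) (v x)).re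
          + 2 * (z' x * (starRingEnd ℂ) (z x)).re
          + 2 * (y'' x * (starRingEnd ℂ) (y' x)).re) (Set.Icc 0 L) :=
    (((continuousOn_const.mul (continuousOn_const.mul
        (Complex.continuous_re.comp_continuousOn (hS'c.mul cSc.star)))).add
      (continuousOn_const.mul (Complex.continuous_re.comp_continuousOn (hv'c.mul cvc.star)))).add
      (continuousOn_const.mul (Complex.continuous_re.comp_continuousOn (hz'c.mul czc.star)))).add
      (continuousOn_const.mul (Complex.continuous_re.comp_continuousOn (hy''c.mul cypc.star)))
  have cP' : ContinuousOn (fun x =>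
      h' x * (a⁻¹ * ‖S x‖ ^ 2 + ‖v x‖ ^ 2 + ‖z x‖ ^ 2 + ‖y' x‖ ^ 2)
        + h x * (a⁻¹ * (2 * (S' x * (starRingEnd ℂ) (S x)).re)
          + 2 * (v' x * (starRingEnd ℂ) (v x)).re
          + 2 * (z' x * (starRingEnd ℂ) (z x)).re
          + 2 * (y'' x * (starRingEnd ℂ) (y' x)).re)) (Set.Icc 0 L) :=
    (hh'c.mul cQ).add (chc.mul cD)
  have hPd : ∀ x ∈ Set.Icc (0:ℝ) L,
      HasDerivAt (fun t => h t * (a⁻¹ * ‖S t‖ ^ 2 + ‖v t‖ ^ 2 + ‖z t‖ ^ 2 + ‖y' t‖ ^ 2))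
        (h' x * (a⁻¹ * ‖S x‖ ^ 2 + ‖v x‖ ^ 2 + ‖z x‖ ^ 2 + ‖y' x‖ ^ 2)
        + h x * (a⁻¹ * (2 * (S' x * (starRingEnd ℂ) (S x)).re)
          + 2 * (v' x * (starRingEnd ℂ) (v x)).re
          + 2 * (z' x * (starRingEnd ℂ) (z x)).re
          + 2 * (y'' x * (starRingEnd ℂ) (y' x)).re)) x := by
    intro x hx
    exact (hh x hx).mul
      ((((hasDerivAt_normSq' (hS x hx)).const_mul a⁻¹).add (hasDerivAt_normSq' (hv x hx))).add
        (hasDerivAt_normSq' (hz x hx))|>.add (hasDerivAt_normSq' (hy' x hx)))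
  have iP' : IntervalIntegrable (fun x =>
      h' x * (a⁻¹ * ‖S x‖ ^ 2 + ‖v x‖ ^ 2 + ‖z x‖ ^ 2 + ‖y' x‖ ^ 2)
        + h x * (a⁻¹ * (2 * (S' x * (starRingEnd ℂ) (S x)).re)
          + 2 * (v' x * (starRingEnd ℂ) (v x)).re
          + 2 * (z' x * (starRingEnd ℂ) (z x)).re
          + 2 * (y'' x * (starRingEnd ℂ) (y' x)).re)) volume 0 L :=
    (show ContinuousOn _ (Set.uIcc (0:ℝ) L) by rw [huIL]; exact cP').intervalIntegrable
  have EB : h L * (a⁻¹ * ‖S L‖ ^ 2 + ‖y' L‖ ^ 2) - h 0 * (a⁻¹ * ‖S 0‖ ^ 2 + ‖y' 0‖ ^ 2)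
      = ∫ x in (0:ℝ)..L,
        (h' x * (a⁻¹ * ‖S x‖ ^ 2 + ‖v x‖ ^ 2 + ‖z x‖ ^ 2 + ‖y' x‖ ^ 2)
        + h x * (a⁻¹ * (2 * (S' x * (starRingEnd ℂ) (S x)).re)
          + 2 * (v' x * (starRingEnd ℂ) (v x)).re
          + 2 * (z' x * (starRingEnd ℂ) (z x)).re
          + 2 * (y'' x * (starRingEnd ℂ) (y' x)).re)) := by
    rw [intervalIntegral.integral_eq_sub_of_hasDerivAt (fun x hx => hPd x (huIL ▸ hx)) iP']
    simp [hvL, hzL, hv0, hz0]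
  rw [E1, E2, E3, E4, E5, E6, E7, EB]

  -- differentiated equations 1 and 3
  have hIoo1 : ∀ x ∈ Set.Ioo (0:ℝ) L, Complex.I * (lam:ℂ) * u' x - v' x = f₁' x := by
    intro x hx
    have hxI : x ∈ Set.Icc (0:ℝ) L := Set.Ioo_subset_Icc_self hx
    have hmem : Set.Ioo (0:ℝ) L ∈ nhds x := Ioo_mem_nhds hx.1 hx.2
    have hd : HasDerivAt (fun t => Complex.I * (lam:ℂ) * u t - v t)
        (Complex.I * (lam:ℂ) * u' x - v' x) x := ((hu x hxI).const_mul _).sub (hv x hxI)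
    have hd' : HasDerivAt f₁ (Complex.I * (lam:ℂ) * u' x - v' x) x :=
      hd.congr_of_eventuallyEq (Filter.eventuallyEq_of_mem hmem (fun t ht => (heq1 t ht).symm))
    exact hd'.unique (hf₁ x hxI)
  have hIoo3 : ∀ x ∈ Set.Ioo (0:ℝ) L, Complex.I * (lam:ℂ) * y' x - z' x = f₃' x := by
    intro x hx
    have hxI : x ∈ Set.Icc (0:ℝ) L := Set.Ioo_subset_Icc_self hx
    have hmem : Set.Ioo (0:ℝ) L ∈ nhds x := Ioo_mem_nhds hx.1 hx.2
    have hd : HasDerivAt (fun t => Complex.I * (lam:ℂ) * y t - z t)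
        (Complex.I * (lam:ℂ) * y' x - z' x) x := ((hy x hxI).const_mul _).sub (hz x hxI)
    have hd' : HasDerivAt f₃ (Complex.I * (lam:ℂ) * y' x - z' x) x :=
      hd.congr_of_eventuallyEq (Filter.eventuallyEq_of_mem hmem (fun t ht => (heq3 t ht).symm))
    exact hd'.unique (hf₃ x hxI)
  -- real integrand integrability
  have irA0 : IntervalIntegrable (fun x =>
      h' x * (a⁻¹ * ‖S x‖ ^ 2 + ‖v x‖ ^ 2 + ‖z x‖ ^ 2 + ‖y' x‖ ^ 2)) volume 0 L :=
    (show ContinuousOn _ (Set.uIcc (0:ℝ) L) by rw [huIL]; exact hh'c.mul cQ).intervalIntegrable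
  have irA1 : IntervalIntegrable (fun x =>
      ((2:ℂ) * ((c x : ℂ) * (h x : ℂ) * v x * (starRingEnd ℂ) (y' x))).re) volume 0 L :=
    II_re (gA1.const_mul 2)
  have irA2 : IntervalIntegrable (fun x =>
      (((2 / a : ℝ) : ℂ) * ((c x : ℂ) * (h x : ℂ) * z x * (starRingEnd ℂ) (S x))).re) volume 0 L :=
    II_re (gA2.const_mul _)
  have irA3 : IntervalIntegrable (fun x =>
      ((2 : ℂ) * Complex.I * (lam : ℂ) / (a : ℂ) * ((h x : ℂ) * v x
        * ((κ₁ : ℂ) * (starRingEnd ℂ) (v' x) + (κ₂ : ℂ) * (starRingEnd ℂ) (w x)))).re)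
      volume 0 β :=
    II_re (gA3.const_mul _)
  have irA4 : IntervalIntegrable (fun x =>
      ((2:ℂ) * ((h x : ℂ) * (starRingEnd ℂ) (f₁' x) * v x)).re) volume 0 L :=
    II_re (gA4.const_mul 2)
  have irA5 : IntervalIntegrable (fun x =>
      (((2 / a : ℝ) : ℂ) * ((h x : ℂ) * f₂ x * (starRingEnd ℂ) (S x))).re) volume 0 L :=
    II_re (gA5.const_mul _)
  have irA6 : IntervalIntegrable (fun x =>
      ((2:ℂ) * ((h x : ℂ) * (starRingEnd ℂ) (f₃' x) * z x)).re) volume 0 L :=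
    II_re (gA6.const_mul 2)
  have irA7 : IntervalIntegrable (fun x =>
      ((2:ℂ) * ((h x : ℂ) * f₄ x * (starRingEnd ℂ) (y' x))).re) volume 0 L :=
    II_re (gA7.const_mul 2)
  -- split the integrals at β
  have s0 := (intervalIntegral.integral_add_adjacent_intervals
    (irA0.mono_set hsubL) (irA0.mono_set hsubR)).symm
  have sP := (intervalIntegral.integral_add_adjacent_intervals
    (iP'.mono_set hsubL) (iP'.mono_set hsubR)).symm
  have s1 := (intervalIntegral.integral_add_adjacent_intervals
    (irA1.mono_set hsubL) (irA1.mono_set hsubR)).symm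
  have s2 := (intervalIntegral.integral_add_adjacent_intervals
    (irA2.mono_set hsubL) (irA2.mono_set hsubR)).symm
  have s4 := (intervalIntegral.integral_add_adjacent_intervals
    (irA4.mono_set hsubL) (irA4.mono_set hsubR)).symm
  have s5 := (intervalIntegral.integral_add_adjacent_intervals
    (irA5.mono_set hsubL) (irA5.mono_set hsubR)).symm
  have s6 := (intervalIntegral.integral_add_adjacent_intervals
    (irA6.mono_set hsubL) (irA6.mono_set hsubR)).symm
  have s7 := (intervalIntegral.integral_add_adjacent_intervals
    (irA7.mono_set hsubL) (irA7.mono_set hsubR)).symm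
  rw [s0, sP, s1, s2, s4, s5, s6, s7]

  -- pointwise identities via core_id
  have Hbc : (∫ x in (0:ℝ)..β, (h' x * (a⁻¹ * ‖S x‖ ^ 2 + ‖v x‖ ^ 2 + ‖z x‖ ^ 2 + ‖y' x‖ ^ 2) + (((2 / a : ℝ) : ℂ) * ((c x : ℂ) * (h x : ℂ) * z x * (starRingEnd ℂ) (S x))).re + ((2 : ℂ) * Complex.I * (lam : ℂ) / (a : ℂ) * ((h x : ℂ) * v x
        * ((κ₁ : ℂ) * (starRingEnd ℂ) (v' x) + (κ₂ : ℂ) * (starRingEnd ℂ) (w x)))).re))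
      = ∫ x in (0:ℝ)..β, ((h' x * (a⁻¹ * ‖S x‖ ^ 2 + ‖v x‖ ^ 2 + ‖z x‖ ^ 2 + ‖y' x‖ ^ 2)
        + h x * (a⁻¹ * (2 * (S' x * (starRingEnd ℂ) (S x)).re)
          + 2 * (v' x * (starRingEnd ℂ) (v x)).re
          + 2 * (z' x * (starRingEnd ℂ) (z x)).re
          + 2 * (y'' x * (starRingEnd ℂ) (y' x)).re)) + ((2:ℂ) * ((c x : ℂ) * (h x : ℂ) * v x * (starRingEnd ℂ) (y' x))).re + ((2:ℂ) * ((h x : ℂ) * (starRingEnd ℂ) (f₁' x) * v x)).re + (((2 / a : ℝ) : ℂ) * ((h x : ℂ) * f₂ x * (starRingEnd ℂ) (S x))).re + ((2:ℂ) * ((h x : ℂ) * (starRingEnd ℂ) (f₃' x) * z x)).re + ((2:ℂ) * ((h x : ℂ) * f₄ x * (starRingEnd ℂ) (y' x))).re) := by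
    apply intervalIntegral.integral_congr_ae
    have hne : ∀ᵐ (x:ℝ) ∂volume, x ∉ ({β} : Set ℝ) :=
      MeasureTheory.measure_eq_zero_iff_ae_notMem.mp (measure_singleton β)
    filter_upwards [hne] with x hxne hmem
    rw [Set.uIoc_of_le h0β] at hmem
    have hxβ : x ∈ Set.Ioo (0:ℝ) β := ⟨hmem.1, lt_of_le_of_ne hmem.2 (by simpa using hxne)⟩
    have hxL : x ∈ Set.Ioo (0:ℝ) L := ⟨hxβ.1, lt_trans hxβ.2 hβLlt⟩
    have key := core_id a lam κ₁ κ₂ (c x) (h x) (ne_of_gt ha)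
      (u' x) (v x) (v' x) (z x) (z' x) (y' x) (y'' x) (w x)
      (f₁' x) (f₂ x) (f₃' x) (f₄ x) (S x) (S' x)
      (hIoo1 x hxL) (heq2 x hxL) (hIoo3 x hxL) (heq4 x hxL) (hS1 x hxβ)
    linarith [key]
  have HLc : (∫ x in β..L, (h' x * (a⁻¹ * ‖S x‖ ^ 2 + ‖v x‖ ^ 2 + ‖z x‖ ^ 2 + ‖y' x‖ ^ 2) + (((2 / a : ℝ) : ℂ) * ((c x : ℂ) * (h x : ℂ) * z x * (starRingEnd ℂ) (S x))).re))
      = ∫ x in β..L, ((h' x * (a⁻¹ * ‖S x‖ ^ 2 + ‖v x‖ ^ 2 + ‖z x‖ ^ 2 + ‖y' x‖ ^ 2)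
        + h x * (a⁻¹ * (2 * (S' x * (starRingEnd ℂ) (S x)).re)
          + 2 * (v' x * (starRingEnd ℂ) (v x)).re
          + 2 * (z' x * (starRingEnd ℂ) (z x)).re
          + 2 * (y'' x * (starRingEnd ℂ) (y' x)).re)) + ((2:ℂ) * ((c x : ℂ) * (h x : ℂ) * v x * (starRingEnd ℂ) (y' x))).re + ((2:ℂ) * ((h x : ℂ) * (starRingEnd ℂ) (f₁' x) * v x)).re + (((2 / a : ℝ) : ℂ) * ((h x : ℂ) * f₂ x * (starRingEnd ℂ) (S x))).re + ((2:ℂ) * ((h x : ℂ) * (starRingEnd ℂ) (f₃' x) * z x)).re + ((2:ℂ) * ((h x : ℂ) * f₄ x * (starRingEnd ℂ) (y' x))).re) := by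
    apply intervalIntegral.integral_congr_ae
    have hne : ∀ᵐ (x:ℝ) ∂volume, x ∉ ({L} : Set ℝ) :=
      MeasureTheory.measure_eq_zero_iff_ae_notMem.mp (measure_singleton L)
    filter_upwards [hne] with x hxne hmem
    rw [Set.uIoc_of_le hβL] at hmem
    have hxβ : x ∈ Set.Ioo β L := ⟨hmem.1, lt_of_le_of_ne hmem.2 (by simpa using hxne)⟩
    have hxL : x ∈ Set.Ioo (0:ℝ) L := ⟨lt_trans h0βlt hxβ.1, hxβ.2⟩
    have es0 : S x = (a:ℂ) * u' x + ((0:ℝ):ℂ) * v' x + ((0:ℝ):ℂ) * 0 := by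
      rw [hS2 x hxβ]; push_cast; ring
    have key := core_id a lam 0 0 (c x) (h x) (ne_of_gt ha)
      (u' x) (v x) (v' x) (z x) (z' x) (y' x) (y'' x) 0
      (f₁' x) (f₂ x) (f₃' x) (f₄ x) (S x) (S' x)
      (hIoo1 x hxL) (heq2 x hxL) (hIoo3 x hxL) (heq4 x hxL) es0
    simp only [Complex.ofReal_zero, zero_mul, mul_zero, add_zero, zero_add, map_zero,
      Complex.zero_re] at key
    linarith [key]
  -- expand the combined integrals
  have Hbl : (∫ x in (0:ℝ)..β, (h' x * (a⁻¹ * ‖S x‖ ^ 2 + ‖v x‖ ^ 2 + ‖z x‖ ^ 2 + ‖y' x‖ ^ 2) + (((2 / a : ℝ) : ℂ) * ((c x : ℂ) * (h x : ℂ) * z x * (starRingEnd ℂ) (S x))).re + ((2 : ℂ) * Complex.I * (lam : ℂ) / (a : ℂ) * ((h x : ℂ) * v x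
        * ((κ₁ : ℂ) * (starRingEnd ℂ) (v' x) + (κ₂ : ℂ) * (starRingEnd ℂ) (w x)))).re))
      = (∫ x in (0:ℝ)..β, h' x * (a⁻¹ * ‖S x‖ ^ 2 + ‖v x‖ ^ 2 + ‖z x‖ ^ 2 + ‖y' x‖ ^ 2)) + (∫ x in (0:ℝ)..β, (((2 / a : ℝ) : ℂ) * ((c x : ℂ) * (h x : ℂ) * z x * (starRingEnd ℂ) (S x))).re) + ∫ x in (0:ℝ)..β, ((2 : ℂ) * Complex.I * (lam : ℂ) / (a : ℂ) * ((h x : ℂ) * v x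
        * ((κ₁ : ℂ) * (starRingEnd ℂ) (v' x) + (κ₂ : ℂ) * (starRingEnd ℂ) (w x)))).re := by
    rw [intervalIntegral.integral_add ((irA0.mono_set hsubL).add (irA2.mono_set hsubL)) irA3,
      intervalIntegral.integral_add (irA0.mono_set hsubL) (irA2.mono_set hsubL)]
  have Hbr : (∫ x in (0:ℝ)..β, ((h' x * (a⁻¹ * ‖S x‖ ^ 2 + ‖v x‖ ^ 2 + ‖z x‖ ^ 2 + ‖y' x‖ ^ 2)
        + h x * (a⁻¹ * (2 * (S' x * (starRingEnd ℂ) (S x)).re)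
          + 2 * (v' x * (starRingEnd ℂ) (v x)).re
          + 2 * (z' x * (starRingEnd ℂ) (z x)).re
          + 2 * (y'' x * (starRingEnd ℂ) (y' x)).re)) + ((2:ℂ) * ((c x : ℂ) * (h x : ℂ) * v x * (starRingEnd ℂ) (y' x))).re + ((2:ℂ) * ((h x : ℂ) * (starRingEnd ℂ) (f₁' x) * v x)).re + (((2 / a : ℝ) : ℂ) * ((h x : ℂ) * f₂ x * (starRingEnd ℂ) (S x))).re + ((2:ℂ) * ((h x : ℂ) * (starRingEnd ℂ) (f₃' x) * z x)).re + ((2:ℂ) * ((h x : ℂ) * f₄ x * (starRingEnd ℂ) (y' x))).re))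
      = (∫ x in (0:ℝ)..β, (h' x * (a⁻¹ * ‖S x‖ ^ 2 + ‖v x‖ ^ 2 + ‖z x‖ ^ 2 + ‖y' x‖ ^ 2)
        + h x * (a⁻¹ * (2 * (S' x * (starRingEnd ℂ) (S x)).re)
          + 2 * (v' x * (starRingEnd ℂ) (v x)).re
          + 2 * (z' x * (starRingEnd ℂ) (z x)).re
          + 2 * (y'' x * (starRingEnd ℂ) (y' x)).re))) + (∫ x in (0:ℝ)..β, ((2:ℂ) * ((c x : ℂ) * (h x : ℂ) * v x * (starRingEnd ℂ) (y' x))).re) + (∫ x in (0:ℝ)..β, ((2:ℂ) * ((h x : ℂ) * (starRingEnd ℂ) (f₁' x) * v x)).re)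
        + (∫ x in (0:ℝ)..β, (((2 / a : ℝ) : ℂ) * ((h x : ℂ) * f₂ x * (starRingEnd ℂ) (S x))).re) + (∫ x in (0:ℝ)..β, ((2:ℂ) * ((h x : ℂ) * (starRingEnd ℂ) (f₃' x) * z x)).re) + ∫ x in (0:ℝ)..β, ((2:ℂ) * ((h x : ℂ) * f₄ x * (starRingEnd ℂ) (y' x))).re := by
    rw [intervalIntegral.integral_add (((((iP'.mono_set hsubL).add (irA1.mono_set hsubL)).add
        (irA4.mono_set hsubL)).add (irA5.mono_set hsubL)).add (irA6.mono_set hsubL))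
        (irA7.mono_set hsubL),
      intervalIntegral.integral_add ((((iP'.mono_set hsubL).add (irA1.mono_set hsubL)).add
        (irA4.mono_set hsubL)).add (irA5.mono_set hsubL)) (irA6.mono_set hsubL),
      intervalIntegral.integral_add (((iP'.mono_set hsubL).add (irA1.mono_set hsubL)).add
        (irA4.mono_set hsubL)) (irA5.mono_set hsubL),
      intervalIntegral.integral_add ((iP'.mono_set hsubL).add (irA1.mono_set hsubL))
        (irA4.mono_set hsubL),
      intervalIntegral.integral_add (iP'.mono_set hsubL) (irA1.mono_set hsubL)]
  have HLl : (∫ x in β..L, (h' x * (a⁻¹ * ‖S x‖ ^ 2 + ‖v x‖ ^ 2 + ‖z x‖ ^ 2 + ‖y' x‖ ^ 2) + (((2 / a : ℝ) : ℂ) * ((c x : ℂ) * (h x : ℂ) * z x * (starRingEnd ℂ) (S x))).re))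
      = (∫ x in β..L, h' x * (a⁻¹ * ‖S x‖ ^ 2 + ‖v x‖ ^ 2 + ‖z x‖ ^ 2 + ‖y' x‖ ^ 2)) + ∫ x in β..L, (((2 / a : ℝ) : ℂ) * ((c x : ℂ) * (h x : ℂ) * z x * (starRingEnd ℂ) (S x))).re := by
    rw [intervalIntegral.integral_add (irA0.mono_set hsubR) (irA2.mono_set hsubR)]
  have HLr : (∫ x in β..L, ((h' x * (a⁻¹ * ‖S x‖ ^ 2 + ‖v x‖ ^ 2 + ‖z x‖ ^ 2 + ‖y' x‖ ^ 2)
        + h x * (a⁻¹ * (2 * (S' x * (starRingEnd ℂ) (S x)).re)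
          + 2 * (v' x * (starRingEnd ℂ) (v x)).re
          + 2 * (z' x * (starRingEnd ℂ) (z x)).re
          + 2 * (y'' x * (starRingEnd ℂ) (y' x)).re)) + ((2:ℂ) * ((c x : ℂ) * (h x : ℂ) * v x * (starRingEnd ℂ) (y' x))).re + ((2:ℂ) * ((h x : ℂ) * (starRingEnd ℂ) (f₁' x) * v x)).re + (((2 / a : ℝ) : ℂ) * ((h x : ℂ) * f₂ x * (starRingEnd ℂ) (S x))).re + ((2:ℂ) * ((h x : ℂ) * (starRingEnd ℂ) (f₃' x) * z x)).re + ((2:ℂ) * ((h x : ℂ) * f₄ x * (starRingEnd ℂ) (y' x))).re))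
      = (∫ x in β..L, (h' x * (a⁻¹ * ‖S x‖ ^ 2 + ‖v x‖ ^ 2 + ‖z x‖ ^ 2 + ‖y' x‖ ^ 2)
        + h x * (a⁻¹ * (2 * (S' x * (starRingEnd ℂ) (S x)).re)
          + 2 * (v' x * (starRingEnd ℂ) (v x)).re
          + 2 * (z' x * (starRingEnd ℂ) (z x)).re
          + 2 * (y'' x * (starRingEnd ℂ) (y' x)).re))) + (∫ x in β..L, ((2:ℂ) * ((c x : ℂ) * (h x : ℂ) * v x * (starRingEnd ℂ) (y' x))).re) + (∫ x in β..L, ((2:ℂ) * ((h x : ℂ) * (starRingEnd ℂ) (f₁' x) * v x)).re)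
        + (∫ x in β..L, (((2 / a : ℝ) : ℂ) * ((h x : ℂ) * f₂ x * (starRingEnd ℂ) (S x))).re) + (∫ x in β..L, ((2:ℂ) * ((h x : ℂ) * (starRingEnd ℂ) (f₃' x) * z x)).re) + ∫ x in β..L, ((2:ℂ) * ((h x : ℂ) * f₄ x * (starRingEnd ℂ) (y' x))).re := by
    rw [intervalIntegral.integral_add (((((iP'.mono_set hsubR).add (irA1.mono_set hsubR)).add
        (irA4.mono_set hsubR)).add (irA5.mono_set hsubR)).add (irA6.mono_set hsubR))
        (irA7.mono_set hsubR),
      intervalIntegral.integral_add ((((iP'.mono_set hsubR).add (irA1.mono_set hsubR)).add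
        (irA4.mono_set hsubR)).add (irA5.mono_set hsubR)) (irA6.mono_set hsubR),
      intervalIntegral.integral_add (((iP'.mono_set hsubR).add (irA1.mono_set hsubR)).add
        (irA4.mono_set hsubR)) (irA5.mono_set hsubR),
      intervalIntegral.integral_add ((iP'.mono_set hsubR).add (irA1.mono_set hsubR))
        (irA4.mono_set hsubR),
      intervalIntegral.integral_add (iP'.mono_set hsubR) (irA1.mono_set hsubR)]
  linarith [Hbc, HLc, Hbl, Hbr, HLl, HLr]
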